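/- In the Bar-Natan algebra 𝓑 (the path algebra over a field k of the quiver with two vertices •, ∘, loops D_•, D_∘, and arrows S_• : • → ∘, S_∘ : ∘ → •, modulo the relations D_∘S_• = S_•D_• = 0 and D_•S_∘ = S_∘D_∘ = 0), the element H := S_∘S_• − D_• + S_•S_∘ − D_∘ is central. -/

import Mathlib

/- The Bar-Natan algebra 𝓑: path algebra over k of the quiver with two vertices
•, ∘ (idempotents eb, ec), loops Db, Dc, arrows Sb : • → ∘ and Sc : ∘ → •,
modulo D_∘S_• = S_•D_• = 0 and D_•S_∘ = S_∘D_∘ = 0.  Paths compose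
right-to-left, so the product x * y is "path y followed by path x". -/

inductive BNGen : Type
  | eb | ec | Db | Dc | Sb | Sc

variable (k : Type) [Field k]

noncomputable def bn (x : BNGen) : FreeAlgebra k BNGen := FreeAlgebra.ι k x

inductive BNRel : FreeAlgebra k BNGen → FreeAlgebra k BNGen → Prop
  | idem_b : BNRel (bn k .eb * bn k .eb) (bn k .eb)
  | idem_c : BNRel (bn k .ec * bn k .ec) (bn k .ec)
  | orth_bc : BNRel (bn k .eb * bn k .ec) 0
  | orth_cb : BNRel (bn k .ec * bn k .eb) 0
  | sum : BNRel (bn k .eb + bn k .ec) 1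
  | Sb_src : BNRel (bn k .Sb * bn k .eb) (bn k .Sb)
  | Sb_tgt : BNRel (bn k .ec * bn k .Sb) (bn k .Sb)
  | Sc_src : BNRel (bn k .Sc * bn k .ec) (bn k .Sc)
  | Sc_tgt : BNRel (bn k .eb * bn k .Sc) (bn k .Sc)
  | Db_src : BNRel (bn k .Db * bn k .eb) (bn k .Db)
  | Db_tgt : BNRel (bn k .eb * bn k .Db) (bn k .Db)
  | Dc_src : BNRel (bn k .Dc * bn k .ec) (bn k .Dc)
  | Dc_tgt : BNRel (bn k .ec * bn k .Dc) (bn k .Dc)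
  | DcSb : BNRel (bn k .Dc * bn k .Sb) 0
  | SbDb : BNRel (bn k .Sb * bn k .Db) 0
  | DbSc : BNRel (bn k .Db * bn k .Sc) 0
  | ScDc : BNRel (bn k .Sc * bn k .Dc) 0

/-- The quotient map onto the Bar-Natan algebra 𝓑 = RingQuot (BNRel k). -/
noncomputable def bnπ : FreeAlgebra k BNGen →ₐ[k] RingQuot (BNRel k) :=
  RingQuot.mkAlgHom k (BNRel k)

/-- H = S_∘S_• − D_• + S_•S_∘ − D_∘ (here S_∘S_• is the path S_• followed by S_∘,
which in our multiplication convention is `Sc * Sb`). -/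
noncomputable def BNH : RingQuot (BNRel k) :=
  bnπ k (bn k .Sc * bn k .Sb) - bnπ k (bn k .Db)
    + bnπ k (bn k .Sb * bn k .Sc) - bnπ k (bn k .Dc)


namespace BNaux

variable {k : Type} [Field k]

/-- Image of a generator in the Bar-Natan algebra. -/
noncomputable def G (k : Type) [Field k] (g : BNGen) : RingQuot (BNRel k) :=
  bnπ k (bn k g)

lemma Gdef (g : BNGen) : bnπ k (bn k g) = G k g := rfl

lemma rel_eq {a b : FreeAlgebra k BNGen} (h : BNRel k a b) : bnπ k a = bnπ k b :=
  RingQuot.mkAlgHom_rel k h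

lemma pair {g1 g2 g3 : BNGen} (h : BNRel k (bn k g1 * bn k g2) (bn k g3)) :
    G k g1 * G k g2 = G k g3 := by
  have := rel_eq h; rwa [map_mul] at this

lemma pair0 {g1 g2 : BNGen} (h : BNRel k (bn k g1 * bn k g2) 0) :
    G k g1 * G k g2 = 0 := by
  have := rel_eq h; rwa [map_mul, map_zero] at this

lemma ebeb : G k (.eb) * G k (.eb) = G k .eb := pair BNRel.idem_b
lemma ebeb' (x : RingQuot (BNRel k)) : G k (.eb) * (G k (.eb) * x) = G k .eb * x := by rw [← mul_assoc, ebeb]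

lemma ecec : G k (.ec) * G k (.ec) = G k .ec := pair BNRel.idem_c
lemma ecec' (x : RingQuot (BNRel k)) : G k (.ec) * (G k (.ec) * x) = G k .ec * x := by rw [← mul_assoc, ecec]

lemma ebec : G k (.eb) * G k (.ec) = 0 := pair0 BNRel.orth_bc
lemma ebec' (x : RingQuot (BNRel k)) : G k (.eb) * (G k (.ec) * x) = 0 := by rw [← mul_assoc, ebec]; rw [zero_mul]

lemma eceb : G k (.ec) * G k (.eb) = 0 := pair0 BNRel.orth_cb
lemma eceb' (x : RingQuot (BNRel k)) : G k (.ec) * (G k (.eb) * x) = 0 := by rw [← mul_assoc, eceb]; rw [zero_mul]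

lemma Sbeb : G k (.Sb) * G k (.eb) = G k .Sb := pair BNRel.Sb_src
lemma Sbeb' (x : RingQuot (BNRel k)) : G k (.Sb) * (G k (.eb) * x) = G k .Sb * x := by rw [← mul_assoc, Sbeb]

lemma ecSb : G k (.ec) * G k (.Sb) = G k .Sb := pair BNRel.Sb_tgt
lemma ecSb' (x : RingQuot (BNRel k)) : G k (.ec) * (G k (.Sb) * x) = G k .Sb * x := by rw [← mul_assoc, ecSb]

lemma Scec : G k (.Sc) * G k (.ec) = G k .Sc := pair BNRel.Sc_src
lemma Scec' (x : RingQuot (BNRel k)) : G k (.Sc) * (G k (.ec) * x) = G k .Sc * x := by rw [← mul_assoc, Scec]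

lemma ebSc : G k (.eb) * G k (.Sc) = G k .Sc := pair BNRel.Sc_tgt
lemma ebSc' (x : RingQuot (BNRel k)) : G k (.eb) * (G k (.Sc) * x) = G k .Sc * x := by rw [← mul_assoc, ebSc]

lemma Dbeb : G k (.Db) * G k (.eb) = G k .Db := pair BNRel.Db_src
lemma Dbeb' (x : RingQuot (BNRel k)) : G k (.Db) * (G k (.eb) * x) = G k .Db * x := by rw [← mul_assoc, Dbeb]

lemma ebDb : G k (.eb) * G k (.Db) = G k .Db := pair BNRel.Db_tgt
lemma ebDb' (x : RingQuot (BNRel k)) : G k (.eb) * (G k (.Db) * x) = G k .Db * x := by rw [← mul_assoc, ebDb]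

lemma Dcec : G k (.Dc) * G k (.ec) = G k .Dc := pair BNRel.Dc_src
lemma Dcec' (x : RingQuot (BNRel k)) : G k (.Dc) * (G k (.ec) * x) = G k .Dc * x := by rw [← mul_assoc, Dcec]

lemma ecDc : G k (.ec) * G k (.Dc) = G k .Dc := pair BNRel.Dc_tgt
lemma ecDc' (x : RingQuot (BNRel k)) : G k (.ec) * (G k (.Dc) * x) = G k .Dc * x := by rw [← mul_assoc, ecDc]

lemma DcSb : G k (.Dc) * G k (.Sb) = 0 := pair0 BNRel.DcSb
lemma DcSb' (x : RingQuot (BNRel k)) : G k (.Dc) * (G k (.Sb) * x) = 0 := by rw [← mul_assoc, DcSb]; rw [zero_mul]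

lemma SbDb : G k (.Sb) * G k (.Db) = 0 := pair0 BNRel.SbDb
lemma SbDb' (x : RingQuot (BNRel k)) : G k (.Sb) * (G k (.Db) * x) = 0 := by rw [← mul_assoc, SbDb]; rw [zero_mul]

lemma DbSc : G k (.Db) * G k (.Sc) = 0 := pair0 BNRel.DbSc
lemma DbSc' (x : RingQuot (BNRel k)) : G k (.Db) * (G k (.Sc) * x) = 0 := by rw [← mul_assoc, DbSc]; rw [zero_mul]

lemma ScDc : G k (.Sc) * G k (.Dc) = 0 := pair0 BNRel.ScDc
lemma ScDc' (x : RingQuot (BNRel k)) : G k (.Sc) * (G k (.Dc) * x) = 0 := by rw [← mul_assoc, ScDc]; rw [zero_mul]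

lemma ebSb : G k (.eb) * G k (.Sb) = 0 := by rw [← ecSb, ← mul_assoc, ebec, zero_mul]
lemma ebSb' (x : RingQuot (BNRel k)) : G k (.eb) * (G k (.Sb) * x) = 0 := by rw [← mul_assoc, ebSb, zero_mul]

lemma Sbec : G k (.Sb) * G k (.ec) = 0 := by rw [← Sbeb, mul_assoc, ebec, mul_zero]
lemma Sbec' (x : RingQuot (BNRel k)) : G k (.Sb) * (G k (.ec) * x) = 0 := by rw [← mul_assoc, Sbec, zero_mul]

lemma Sceb : G k (.Sc) * G k (.eb) = 0 := by rw [← Scec, mul_assoc, eceb, mul_zero]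
lemma Sceb' (x : RingQuot (BNRel k)) : G k (.Sc) * (G k (.eb) * x) = 0 := by rw [← mul_assoc, Sceb, zero_mul]

lemma ecSc : G k (.ec) * G k (.Sc) = 0 := by rw [← ebSc, ← mul_assoc, eceb, zero_mul]
lemma ecSc' (x : RingQuot (BNRel k)) : G k (.ec) * (G k (.Sc) * x) = 0 := by rw [← mul_assoc, ecSc, zero_mul]

lemma ebDc : G k (.eb) * G k (.Dc) = 0 := by rw [← ecDc, ← mul_assoc, ebec, zero_mul]
lemma ebDc' (x : RingQuot (BNRel k)) : G k (.eb) * (G k (.Dc) * x) = 0 := by rw [← mul_assoc, ebDc, zero_mul]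

lemma Dceb : G k (.Dc) * G k (.eb) = 0 := by rw [← Dcec, mul_assoc, eceb, mul_zero]
lemma Dceb' (x : RingQuot (BNRel k)) : G k (.Dc) * (G k (.eb) * x) = 0 := by rw [← mul_assoc, Dceb, zero_mul]

lemma ecDb : G k (.ec) * G k (.Db) = 0 := by rw [← ebDb, ← mul_assoc, eceb, zero_mul]
lemma ecDb' (x : RingQuot (BNRel k)) : G k (.ec) * (G k (.Db) * x) = 0 := by rw [← mul_assoc, ecDb, zero_mul]

lemma Dbec : G k (.Db) * G k (.ec) = 0 := by rw [← Dbeb, mul_assoc, ebec, mul_zero]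
lemma Dbec' (x : RingQuot (BNRel k)) : G k (.Db) * (G k (.ec) * x) = 0 := by rw [← mul_assoc, Dbec, zero_mul]

lemma SbSb : G k (.Sb) * G k (.Sb) = 0 := by nth_rewrite 1 [← Sbeb]; rw [mul_assoc, ebSb, mul_zero]
lemma SbSb' (x : RingQuot (BNRel k)) : G k (.Sb) * (G k (.Sb) * x) = 0 := by rw [← mul_assoc, SbSb, zero_mul]

lemma ScSc : G k (.Sc) * G k (.Sc) = 0 := by nth_rewrite 1 [← Scec]; rw [mul_assoc, ecSc, mul_zero]
lemma ScSc' (x : RingQuot (BNRel k)) : G k (.Sc) * (G k (.Sc) * x) = 0 := by rw [← mul_assoc, ScSc, zero_mul]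

lemma DbSb : G k (.Db) * G k (.Sb) = 0 := by rw [← ecSb, ← mul_assoc, Dbec, zero_mul]
lemma DbSb' (x : RingQuot (BNRel k)) : G k (.Db) * (G k (.Sb) * x) = 0 := by rw [← mul_assoc, DbSb, zero_mul]

lemma SbDc : G k (.Sb) * G k (.Dc) = 0 := by rw [← ecDc, ← mul_assoc, Sbec, zero_mul]
lemma SbDc' (x : RingQuot (BNRel k)) : G k (.Sb) * (G k (.Dc) * x) = 0 := by rw [← mul_assoc, SbDc, zero_mul]

lemma DcSc : G k (.Dc) * G k (.Sc) = 0 := by rw [← ebSc, ← mul_assoc, Dceb, zero_mul]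
lemma DcSc' (x : RingQuot (BNRel k)) : G k (.Dc) * (G k (.Sc) * x) = 0 := by rw [← mul_assoc, DcSc, zero_mul]

lemma ScDb : G k (.Sc) * G k (.Db) = 0 := by rw [← ebDb, ← mul_assoc, Sceb, zero_mul]
lemma ScDb' (x : RingQuot (BNRel k)) : G k (.Sc) * (G k (.Db) * x) = 0 := by rw [← mul_assoc, ScDb, zero_mul]

lemma DbDc : G k (.Db) * G k (.Dc) = 0 := by rw [← ecDc, ← mul_assoc, Dbec, zero_mul]
lemma DbDc' (x : RingQuot (BNRel k)) : G k (.Db) * (G k (.Dc) * x) = 0 := by rw [← mul_assoc, DbDc, zero_mul]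

lemma DcDb : G k (.Dc) * G k (.Db) = 0 := by rw [← ebDb, ← mul_assoc, Dceb, zero_mul]
lemma DcDb' (x : RingQuot (BNRel k)) : G k (.Dc) * (G k (.Db) * x) = 0 := by rw [← mul_assoc, DcDb, zero_mul]

end BNaux

/- STATEMENT 3: H is central in the Bar-Natan algebra. -/
theorem stmt3 (x : RingQuot (BNRel k)) : BNH k * x = x * BNH k := by
  open BNaux in
  have comm : ∀ g : BNGen, BNH k * BNaux.G k g = BNaux.G k g * BNH k := by
    intro g
    cases g <;>
      simp only [BNH, map_mul, BNaux.Gdef, sub_mul, add_mul, mul_sub, mul_add,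
        mul_assoc,
        ebeb, ecec, ebec, eceb, Sbeb, ecSb, Scec, ebSc, Dbeb, ebDb, Dcec, ecDc,
        DcSb, SbDb, DbSc, ScDc, ebSb, Sbec, Sceb, ecSc, ebDc, Dceb, ecDb, Dbec,
        SbSb, ScSc, DbSb, SbDc, DcSc, ScDb, DbDc, DcDb,
        ebeb', ecec', ebec', eceb', Sbeb', ecSb', Scec', ebSc', Dbeb', ebDb', Dcec', ecDc',
        DcSb', SbDb', DbSc', ScDc', ebSb', Sbec', Sceb', ecSc', ebDc', Dceb', ecDb', Dbec',
        SbSb', ScSc', DbSb', SbDc', DcSc', ScDb', DbDc', DcDb',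
        mul_zero, zero_mul, sub_zero, zero_sub, add_zero, zero_add]
  have key : ∀ y : FreeAlgebra k BNGen, BNH k * bnπ k y = bnπ k y * BNH k := by
    intro y
    induction y using FreeAlgebra.induction with
    | grade0 r => rw [AlgHom.commutes]; exact (Algebra.commutes r (BNH k)).symm
    | grade1 g => exact comm g
    | mul a b ha hb => rw [map_mul, ← mul_assoc, ha, mul_assoc, hb, mul_assoc]
    | add a b ha hb => rw [map_add, mul_add, add_mul, ha, hb]
  obtain ⟨y, rfl⟩ := RingQuot.mkAlgHom_surjective k (BNRel k) x
  exact key y
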